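/- Let X be a metric space, F an 'admissible' family of loops in X, and suppose there is a complete metric subspace of X containing the ranges of all loops in F. Then every loop in F is null-homotopic. Here F is admissible if: (1) for any f ∈ F and δ > 0 there is a punctured homotopy H from f to a constant such that the image of the boundary of each puncture rectangle has diameter < δ and the restriction of H to each puncture boundary is a punctured-homotopy-from-a-member-of-F-to-constant; and (2) for each ε > 0 there is δ > 0 such that every f ∈ F of diameter < δ admits, for every α > 0, a punctured homotopy of diameter < ε from f to constant with puncture boundaries of diameter < α, whose puncture-boundary restrictions again come from members of F. -/

import Mathlib

/-! Punctured homotopies and admissible families of loops: if an admissible family of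
loops in a metric space `X` has all its ranges inside a complete metric subspace, then
every loop of the family is null-homotopic. -/

namespace EarringPaper

variable {X : Type*} [MetricSpace X]

/-- A loop in `X` with domain `[a,b]`. -/
structure LoopIn (X : Type*) [MetricSpace X] where
  f : ℝ → X
  a : ℝ
  b : ℝ
  hab : a < b
  cont : ContinuousOn f (Set.Icc a b)
  closed : f a = f b

/-- The closed rectangle `[p,q] × [r,s]`. -/
def Rect (p q r s : ℝ) : Set (ℝ × ℝ) := Set.Icc p q ×ˢ Set.Icc r s

/-- The open rectangle `(p,q) × (r,s)`. -/
def OpenRect (p q r s : ℝ) : Set (ℝ × ℝ) := Set.Ioo p q ×ˢ Set.Ioo r s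

/-- The boundary of the rectangle `[p,q] × [r,s]`. -/
def BdryRect (p q r s : ℝ) : Set (ℝ × ℝ) := Rect p q r s \ OpenRect p q r s

/-- `H` is bound for constant on `[p,q] × [r,s]`: it is constant on the bottom edge and
the two vertical edges. -/
def BoundForConst (H : ℝ × ℝ → X) (p q r s : ℝ) : Prop :=
  (∀ t ∈ Set.Icc p q, H (t, r) = H (p, r)) ∧
  (∀ u ∈ Set.Icc r s, H (p, u) = H (p, r) ∧ H (q, u) = H (p, r))

/-- A punctured homotopy on `[p,q] × [r,s]` with punctures the open rectangles listed in
`Rs` (a puncture `R ∈ Rs` is recorded by its corners: `R = ((p_i, q_i), (r_i, s_i))`). -/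
structure IsPH (H : ℝ × ℝ → X) (p q r s : ℝ) (Rs : Set ((ℝ × ℝ) × (ℝ × ℝ))) : Prop where
  sub : ∀ R ∈ Rs, p ≤ R.1.1 ∧ R.1.1 < R.1.2 ∧ R.1.2 ≤ q ∧
    r ≤ R.2.1 ∧ R.2.1 < R.2.2 ∧ R.2.2 ≤ s
  disj : ∀ R ∈ Rs, ∀ R' ∈ Rs, R ≠ R' →
    Disjoint (OpenRect R.1.1 R.1.2 R.2.1 R.2.2) (OpenRect R'.1.1 R'.1.2 R'.2.1 R'.2.2)
  cont : ContinuousOn H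
    (Rect p q r s \ ⋃ R ∈ Rs, OpenRect R.1.1 R.1.2 R.2.1 R.2.2)
  bdd : BoundForConst H p q r s
  bddR : ∀ R ∈ Rs, BoundForConst H R.1.1 R.1.2 R.2.1 R.2.2

/-- Each puncture boundary of `H` has image of diameter `< δ` and carries (on its top
edge) a punctured homotopy from a member of `F` to constant. -/
def GoodPunctures (F : Set (LoopIn X)) (H : ℝ × ℝ → X)
    (Rs : Set ((ℝ × ℝ) × (ℝ × ℝ))) (δ : ℝ) : Prop :=
  ∀ R ∈ Rs, Metric.diam (H '' BdryRect R.1.1 R.1.2 R.2.1 R.2.2) < δ ∧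
    ∃ g ∈ F, g.a = R.1.1 ∧ g.b = R.1.2 ∧
      ∀ t ∈ Set.Icc g.a g.b, H (t, R.2.2) = g.f t

/-- An admissible family of loops. -/
def Admissible (F : Set (LoopIn X)) : Prop :=
  (∀ f ∈ F, ∀ δ > (0 : ℝ), ∃ c dd : ℝ, c < dd ∧
    ∃ (H : ℝ × ℝ → X) (Rs : Set ((ℝ × ℝ) × (ℝ × ℝ))), IsPH H f.a f.b c dd Rs ∧
      (∀ t ∈ Set.Icc f.a f.b, H (t, dd) = f.f t) ∧ GoodPunctures F H Rs δ) ∧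
  (∀ ε > (0 : ℝ), ∃ δ > (0 : ℝ), ∀ f ∈ F,
    Metric.diam (f.f '' Set.Icc f.a f.b) < δ → ∀ α > (0 : ℝ),
      ∃ c dd : ℝ, c < dd ∧
      ∃ (H : ℝ × ℝ → X) (Rs : Set ((ℝ × ℝ) × (ℝ × ℝ))), IsPH H f.a f.b c dd Rs ∧
        (∀ t ∈ Set.Icc f.a f.b, H (t, dd) = f.f t) ∧
        Metric.diam (H ''
          (Rect f.a f.b c dd \ ⋃ R ∈ Rs, OpenRect R.1.1 R.1.2 R.2.1 R.2.2)) < ε ∧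
        GoodPunctures F H Rs α)

/-- A loop is null-homotopic: there is a genuine (unpunctured) homotopy, bound for
constant, from the loop to a constant. -/
def NullHtpc (L : LoopIn X) : Prop :=
  ∃ H : ℝ × ℝ → X, ContinuousOn H (Rect L.a L.b 0 1) ∧
    (∀ t ∈ Set.Icc L.a L.b, H (t, 1) = L.f t) ∧ BoundForConst H L.a L.b 0 1

section Geometry

variable {p q r s : ℝ}

lemma isOpen_openRect : IsOpen (OpenRect p q r s) := isOpen_Ioo.prod isOpen_Ioo

lemma isClosed_rect : IsClosed (Rect p q r s) := isClosed_Icc.prod isClosed_Icc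

lemma isCompact_rect : IsCompact (Rect p q r s) := (isCompact_Icc).prod isCompact_Icc

lemma openRect_subset_rect : OpenRect p q r s ⊆ Rect p q r s :=
  Set.prod_mono Set.Ioo_subset_Icc_self Set.Ioo_subset_Icc_self

lemma closure_openRect (hpq : p < q) (hrs : r < s) :
    closure (OpenRect p q r s) = Rect p q r s := by
  rw [OpenRect, closure_prod_eq, closure_Ioo hpq.ne, closure_Ioo hrs.ne, Rect]

lemma mem_rect {z : ℝ × ℝ} : z ∈ Rect p q r s ↔ z.1 ∈ Set.Icc p q ∧ z.2 ∈ Set.Icc r s :=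
  Set.mem_prod

lemma mem_openRect {z : ℝ × ℝ} :
    z ∈ OpenRect p q r s ↔ z.1 ∈ Set.Ioo p q ∧ z.2 ∈ Set.Ioo r s := Set.mem_prod

/-- A point of the closure of an open rectangle disjoint from another open set is not
in that open set. -/
lemma not_mem_of_closure_disjoint {U : Set (ℝ × ℝ)} (hU : IsOpen U)
    (hd : Disjoint (OpenRect p q r s) U) (hpq : p < q) (hrs : r < s)
    {z : ℝ × ℝ} (hz : z ∈ Rect p q r s) : z ∉ U := by
  intro hzU
  have h1 : z ∈ U ∩ closure (OpenRect p q r s) := ⟨hzU, (closure_openRect hpq hrs) ▸ hz⟩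
  have h2 := IsOpen.inter_closure hU h1
  rw [Set.disjoint_iff_inter_eq_empty] at hd
  rw [Set.inter_comm, hd, closure_empty] at h2
  exact h2

/-- crossing lemma: a segment from outside to inside an open rectangle meets the
boundary at a point no farther from `x` than `y` is. -/
lemma exists_bdry_between {x y : ℝ × ℝ} (hpq : p < q) (hrs : r < s)
    (hx : x ∉ OpenRect p q r s) (hy : y ∈ OpenRect p q r s) :
    ∃ z ∈ BdryRect p q r s, dist z x ≤ dist y x := by
  classical
  set seg : ℝ → ℝ × ℝ := fun t => x + t • (y - x) with hseg
  have hsegc : Continuous seg := by fun_prop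
  set T : Set ℝ := {t | t ∈ Set.Icc (0:ℝ) 1 ∧ seg t ∈ OpenRect p q r s} with hT
  have h1T : (1:ℝ) ∈ T := by
    constructor
    · exact ⟨zero_le_one, le_refl 1⟩
    · simpa [hseg] using hy
  have hTne : T.Nonempty := ⟨1, h1T⟩
  have hTbdd : BddBelow T := ⟨0, fun t ht => ht.1.1⟩
  set t₀ := sInf T with ht₀
  have ht₀0 : 0 ≤ t₀ := le_csInf hTne (fun t ht => ht.1.1)
  have ht₀1 : t₀ ≤ 1 := csInf_le hTbdd h1T
  have hz_cl : seg t₀ ∈ closure (OpenRect p q r s) := by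
    have h1 : t₀ ∈ closure T := csInf_mem_closure hTne hTbdd
    have h2 : seg t₀ ∈ closure (seg '' T) := by
      exact image_closure_subset_closure_image (f := seg) (s := T) hsegc ⟨t₀, h1, rfl⟩
    refine closure_mono ?_ h2
    rintro _ ⟨t, ht, rfl⟩; exact ht.2
  have hz_not : seg t₀ ∉ OpenRect p q r s := by
    intro hmem
    have ht₀pos : 0 < t₀ := by
      rcases eq_or_lt_of_le ht₀0 with h | h
      · exfalso; apply hx; simpa [hseg, ← h] using hmem
      · exact h
    have hopen : IsOpen (seg ⁻¹' OpenRect p q r s) := isOpen_openRect.preimage hsegc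
    rcases Metric.isOpen_iff.1 hopen t₀ hmem with ⟨ε, hε, hball⟩
    set t₁ := max 0 (t₀ - ε/2) with ht₁
    have ht₁T : t₁ ∈ T := by
      refine ⟨⟨le_max_left _ _, ?_⟩, ?_⟩
      · exact max_le (ht₀0.trans ht₀1) (by linarith)
      · apply hball
        rw [Metric.mem_ball, Real.dist_eq]
        have h1 : t₁ ≤ t₀ := max_le ht₀0 (by linarith)
        have h2 : t₀ - ε/2 ≤ t₁ := le_max_right _ _
        rw [abs_sub_lt_iff]; constructor <;> linarith
    have : t₀ ≤ t₁ := csInf_le hTbdd ht₁T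
    have ht₁lt : t₁ < t₀ := by
      apply max_lt ht₀pos (by linarith)
    linarith
  refine ⟨seg t₀, ⟨(closure_openRect hpq hrs) ▸ hz_cl, hz_not⟩, ?_⟩
  have heq : dist (seg t₀) x = t₀ * dist y x := by
    rw [dist_eq_norm, dist_eq_norm]
    have h2 : seg t₀ - x = t₀ • (y - x) := by simp [hseg]
    rw [h2, norm_smul, Real.norm_eq_abs, abs_of_nonneg ht₀0, norm_sub_rev]
  rw [heq]
  nlinarith [dist_nonneg (x := y) (y := x)]

end Geometry

section Affine

/-- affine map sending `[r,s]` to `[c,d]`. -/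
noncomputable def lin (r s c d : ℝ) : ℝ → ℝ := fun u => c + (u - r) * ((d - c) / (s - r))

variable {r s c d : ℝ}

lemma lin_left : lin r s c d r = c := by simp [lin]

lemma lin_right (hrs : r < s) : lin r s c d s = d := by
  have h : s - r ≠ 0 := by linarith
  unfold lin
  field_simp
  ring

lemma lin_strictMono (hrs : r < s) (hcd : c < d) : StrictMono (lin r s c d) := by
  intro u v huv
  have h1 : (0:ℝ) < (d - c) / (s - r) := by
    apply div_pos <;> linarith
  simp only [lin]
  nlinarith

lemma lin_continuous : Continuous (lin r s c d) := by
  unfold lin; fun_prop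

lemma lin_lin (hrs : r < s) (hcd : c < d) (u : ℝ) :
    lin c d r s (lin r s c d u) = u := by
  have h1 : s - r ≠ 0 := by linarith
  have h2 : d - c ≠ 0 := by linarith
  unfold lin
  field_simp
  ring

lemma lin_mem_Ioo (hrs : r < s) (hcd : c < d) {a' b' u : ℝ} :
    lin r s c d u ∈ Set.Ioo (lin r s c d a') (lin r s c d b') ↔ u ∈ Set.Ioo a' b' := by
  constructor
  · rintro ⟨h1, h2⟩
    exact ⟨(lin_strictMono hrs hcd).lt_iff_lt.1 h1, (lin_strictMono hrs hcd).lt_iff_lt.1 h2⟩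
  · rintro ⟨h1, h2⟩
    exact ⟨lin_strictMono hrs hcd h1, lin_strictMono hrs hcd h2⟩

lemma lin_mem_Icc (hrs : r < s) (hcd : c < d) {a' b' u : ℝ} :
    lin r s c d u ∈ Set.Icc (lin r s c d a') (lin r s c d b') ↔ u ∈ Set.Icc a' b' := by
  constructor
  · rintro ⟨h1, h2⟩
    exact ⟨((lin_strictMono hrs hcd).le_iff_le).1 h1, ((lin_strictMono hrs hcd).le_iff_le).1 h2⟩
  · rintro ⟨h1, h2⟩
    exact ⟨(lin_strictMono hrs hcd).monotone h1, (lin_strictMono hrs hcd).monotone h2⟩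

end Affine

/-- Bundled context for the construction. -/
structure Ctx (X : Type*) [MetricSpace X] where
  F : Set (LoopIn X)
  hAdm : Admissible F
  Y : Set X
  hY : IsComplete Y
  hFY : ∀ g ∈ F, g.f '' Set.Icc g.a g.b ⊆ Y
  f0 : LoopIn X

variable (C : Ctx X)

/-- `δ` produced by admissibility condition (2) for `ε = (1/2)^n`. -/
noncomputable def dhalf (n : ℕ) : ℝ :=
  Classical.choose (C.hAdm.2 ((1/2)^n) (by positivity))

lemma dhalf_pos (n : ℕ) : 0 < dhalf C n :=
  (Classical.choose_spec (C.hAdm.2 ((1/2)^n) (by positivity))).1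

lemma dhalf_spec (n : ℕ) : ∀ f ∈ C.F,
    Metric.diam (f.f '' Set.Icc f.a f.b) < dhalf C n → ∀ α > (0 : ℝ),
      ∃ c dd : ℝ, c < dd ∧
      ∃ (H : ℝ × ℝ → X) (Rs : Set ((ℝ × ℝ) × (ℝ × ℝ))), IsPH H f.a f.b c dd Rs ∧
        (∀ t ∈ Set.Icc f.a f.b, H (t, dd) = f.f t) ∧
        Metric.diam (H ''
          (Rect f.a f.b c dd \ ⋃ R ∈ Rs, OpenRect R.1.1 R.1.2 R.2.1 R.2.2)) < (1/2)^n ∧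
        GoodPunctures C.F H Rs α :=
  (Classical.choose_spec (C.hAdm.2 ((1/2)^n) (by positivity))).2

/-- The antitone scale of smallness parameters. -/
noncomputable def dpp : ℕ → ℝ
  | 0 => min (dhalf C 0) 1
  | n+1 => min (dpp n) (min (dhalf C (n+1)) ((1/4)^(n+1)))

lemma dpp_pos (n : ℕ) : 0 < dpp C n := by
  induction n with
  | zero => exact lt_min (dhalf_pos C 0) one_pos
  | succ n ih => exact lt_min ih (lt_min (dhalf_pos C (n+1)) (by positivity))

lemma dpp_le_dhalf (n : ℕ) : dpp C n ≤ dhalf C n := by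
  cases n with
  | zero => exact min_le_left _ _
  | succ n => exact (min_le_right _ _).trans (min_le_left _ _)

lemma dpp_le_quarter (n : ℕ) : dpp C n ≤ (1/4)^n := by
  cases n with
  | zero =>
    have : dpp C 0 ≤ 1 := min_le_right _ _
    simpa using this
  | succ n => exact (min_le_right _ _).trans (min_le_right _ _)

lemma dpp_antitone : Antitone (dpp C) := by
  apply antitone_nat_of_succ_le
  intro n
  exact min_le_left _ _

/-- Level assigned to a loop of positive diameter. -/
noncomputable def lvl (g : LoopIn X) : ℕ :=
  sSup {n | Metric.diam (g.f '' Set.Icc g.a g.b) < dpp C n}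

lemma lvl_spec {g : LoopIn X} {k : ℕ}
    (hpos : 0 < Metric.diam (g.f '' Set.Icc g.a g.b))
    (hk : Metric.diam (g.f '' Set.Icc g.a g.b) < dpp C k) :
    k ≤ lvl C g ∧ Metric.diam (g.f '' Set.Icc g.a g.b) < dpp C (lvl C g) := by
  set D := Metric.diam (g.f '' Set.Icc g.a g.b)
  have hbdd : BddAbove {n | D < dpp C n} := by
    obtain ⟨N, hN⟩ : ∃ N : ℕ, (1/4 : ℝ)^N < D := by
      obtain ⟨N, hN⟩ := exists_pow_lt_of_lt_one hpos (by norm_num : (1/4:ℝ) < 1)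
      exact ⟨N, hN⟩
    refine ⟨N, fun n hn => ?_⟩
    by_contra hlt
    push_neg at hlt
    have : (1/4:ℝ)^n ≤ (1/4)^N := by
      apply pow_le_pow_of_le_one (by norm_num) (by norm_num) hlt.le
    have := (dpp_le_quarter C n).trans this
    have : D < (1/4:ℝ)^N := lt_of_lt_of_le hn this
    linarith
  have hne : {n | D < dpp C n}.Nonempty := ⟨k, hk⟩
  exact ⟨le_csSup hbdd hk, Nat.sSup_mem hne hbdd⟩

/-- `M ≤ lvl` for any `M` witnessing smallness (antitonicity consequence). -/
lemma lvl_ge {g : LoopIn X} {M : ℕ}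
    (hpos : 0 < Metric.diam (g.f '' Set.Icc g.a g.b))
    (hM : Metric.diam (g.f '' Set.Icc g.a g.b) < dpp C M) : M ≤ lvl C g :=
  (lvl_spec C hpos hM).1

/-- The canonical loop attached to a puncture of a map `K`. -/
noncomputable def loopOf (K : ℝ × ℝ → X) (R : (ℝ × ℝ) × (ℝ × ℝ)) : LoopIn X :=
  @Classical.epsilon _ ⟨C.f0⟩ fun g => g ∈ C.F ∧ g.a = R.1.1 ∧ g.b = R.1.2 ∧
    ∀ t ∈ Set.Icc R.1.1 R.1.2, K (t, R.2.2) = g.f t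

lemma loopOf_spec {K : ℝ × ℝ → X} {R : (ℝ × ℝ) × (ℝ × ℝ)}
    (h : ∃ g ∈ C.F, g.a = R.1.1 ∧ g.b = R.1.2 ∧
      ∀ t ∈ Set.Icc R.1.1 R.1.2, K (t, R.2.2) = g.f t) :
    loopOf C K R ∈ C.F ∧ (loopOf C K R).a = R.1.1 ∧ (loopOf C K R).b = R.1.2 ∧
      ∀ t ∈ Set.Icc R.1.1 R.1.2, K (t, R.2.2) = (loopOf C K R).f t := by
  have h' : ∃ g, g ∈ C.F ∧ g.a = R.1.1 ∧ g.b = R.1.2 ∧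
      ∀ t ∈ Set.Icc R.1.1 R.1.2, K (t, R.2.2) = g.f t := by
    obtain ⟨g, hg, h1, h2, h3⟩ := h
    exact ⟨g, hg, h1, h2, h3⟩
  exact @Classical.epsilon_spec _ _ h'


/-- The domain of a punctured map. -/
def Dom (p q r s : ℝ) (Rs : Set ((ℝ × ℝ) × (ℝ × ℝ))) : Set (ℝ × ℝ) :=
  Rect p q r s \ ⋃ R ∈ Rs, OpenRect R.1.1 R.1.2 R.2.1 R.2.2

lemma isCompact_dom {p q r s : ℝ} {Rs : Set ((ℝ × ℝ) × (ℝ × ℝ))} :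
    IsCompact (Dom p q r s Rs) :=
  isCompact_rect.diff (isOpen_biUnion (fun _ _ => isOpen_openRect))

lemma mem_bdryRect_iff {p q r s : ℝ} {z : ℝ × ℝ} (h : z ∈ Rect p q r s) :
    z ∈ BdryRect p q r s ↔ (z.1 = p ∨ z.1 = q ∨ z.2 = r ∨ z.2 = s) := by
  obtain ⟨⟨h1, h2⟩, h3, h4⟩ := mem_rect.1 h
  constructor
  · rintro ⟨-, hno⟩
    by_contra hc
    push_neg at hc
    obtain ⟨e1, e2, e3, e4⟩ := hc
    exact hno (mem_openRect.2 ⟨⟨lt_of_le_of_ne h1 (Ne.symm e1), lt_of_le_of_ne h2 e2⟩,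
      ⟨lt_of_le_of_ne h3 (Ne.symm e3), lt_of_le_of_ne h4 e4⟩⟩)
  · intro hc
    refine ⟨h, fun hop => ?_⟩
    obtain ⟨⟨o1, o2⟩, o3, o4⟩ := mem_openRect.1 hop
    rcases hc with e | e | e | e
    · rw [e] at o1; exact lt_irrefl _ o1
    · rw [e] at o2; exact lt_irrefl _ o2
    · rw [e] at o3; exact lt_irrefl _ o3
    · rw [e] at o4; exact lt_irrefl _ o4

/-- A stage of the construction: a punctured map on a rectangle, in absolute
coordinates, together with a level. -/
structure Piece (C : Ctx X) where
  p : ℝ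
  q : ℝ
  r : ℝ
  s : ℝ
  hpq : p < q
  hrs : r < s
  K : ℝ × ℝ → X
  Rs : Set ((ℝ × ℝ) × (ℝ × ℝ))
  L : ℕ
  isPH : IsPH K p q r s Rs
  good : GoodPunctures C.F K Rs (dpp C (L+1))
  hdiam : L = 0 ∨ Metric.diam (K '' Dom p q r s Rs) ≤ (1/2 : ℝ)^L

namespace Piece

variable {C : Ctx X} (P : Piece C) {R R' : (ℝ × ℝ) × (ℝ × ℝ)}

/-- The domain of the piece. -/
def dom : Set (ℝ × ℝ) := Dom P.p P.q P.r P.s P.Rs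

/-- The loop attached to a hole. -/
noncomputable def loop (R : (ℝ × ℝ) × (ℝ × ℝ)) : LoopIn X := loopOf C P.K R

lemma hole_bounds (hR : R ∈ P.Rs) : P.p ≤ R.1.1 ∧ R.1.1 < R.1.2 ∧ R.1.2 ≤ P.q ∧
    P.r ≤ R.2.1 ∧ R.2.1 < R.2.2 ∧ R.2.2 ≤ P.s := P.isPH.sub R hR

lemma hole_open_subset (hR : R ∈ P.Rs) :
    OpenRect R.1.1 R.1.2 R.2.1 R.2.2 ⊆ OpenRect P.p P.q P.r P.s := by
  obtain ⟨h1, h2, h3, h4, h5, h6⟩ := P.hole_bounds hR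
  exact Set.prod_mono (Set.Ioo_subset_Ioo h1 h3) (Set.Ioo_subset_Ioo h4 h6)

lemma hole_rect_subset (hR : R ∈ P.Rs) :
    Rect R.1.1 R.1.2 R.2.1 R.2.2 ⊆ Rect P.p P.q P.r P.s := by
  obtain ⟨h1, h2, h3, h4, h5, h6⟩ := P.hole_bounds hR
  exact Set.prod_mono (Set.Icc_subset_Icc h1 h3) (Set.Icc_subset_Icc h4 h6)

lemma not_mem_sibling (hR : R ∈ P.Rs) (hR' : R' ∈ P.Rs) (hne : R' ≠ R) {z : ℝ × ℝ}
    (hz : z ∈ Rect R.1.1 R.1.2 R.2.1 R.2.2) :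
    z ∉ OpenRect R'.1.1 R'.1.2 R'.2.1 R'.2.2 := by
  obtain ⟨-, h2, -, -, h5, -⟩ := P.hole_bounds hR
  exact not_mem_of_closure_disjoint isOpen_openRect
    (P.isPH.disj R hR R' hR' (fun h => hne h.symm)) h2 h5 hz

lemma bdry_subset_dom (hR : R ∈ P.Rs) :
    BdryRect R.1.1 R.1.2 R.2.1 R.2.2 ⊆ P.dom := by
  rintro z ⟨hz1, hz2⟩
  refine ⟨P.hole_rect_subset hR hz1, ?_⟩
  intro hmem
  simp only [Set.mem_iUnion] at hmem
  obtain ⟨R', hR', hz'⟩ := hmem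
  by_cases h : R' = R
  · rw [h] at hz'; exact hz2 hz'
  · exact P.not_mem_sibling hR hR' h hz1 hz'

lemma rect_minus_holes_subset_dom {z : ℝ × ℝ} (hz : z ∈ Rect P.p P.q P.r P.s)
    (h : ∀ R'' ∈ P.Rs, z ∉ OpenRect R''.1.1 R''.1.2 R''.2.1 R''.2.2) : z ∈ P.dom := by
  refine ⟨hz, ?_⟩
  intro hmem
  simp only [Set.mem_iUnion] at hmem
  obtain ⟨R'', hR'', hz'⟩ := hmem
  exact h R'' hR'' hz'

lemma piece_bdry_subset_dom {z : ℝ × ℝ} (hz : z ∈ BdryRect P.p P.q P.r P.s) : z ∈ P.dom := by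
  refine P.rect_minus_holes_subset_dom hz.1 (fun R'' hR'' hmem => ?_)
  exact hz.2 (P.hole_open_subset hR'' hmem)

lemma hole_unique (hR : R ∈ P.Rs) (hR' : R' ∈ P.Rs) {x : ℝ × ℝ}
    (hx : x ∈ OpenRect R.1.1 R.1.2 R.2.1 R.2.2) (hx' : x ∈ OpenRect R'.1.1 R'.1.2 R'.2.1 R'.2.2) :
    R = R' := by
  by_contra h
  have hmem : x ∈ OpenRect R.1.1 R.1.2 R.2.1 R.2.2 ∩ OpenRect R'.1.1 R'.1.2 R'.2.1 R'.2.2 :=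
    ⟨hx, hx'⟩
  rw [Set.disjoint_iff_inter_eq_empty.1 (P.isPH.disj R hR R' hR' h)] at hmem
  exact hmem

lemma compact_dom : IsCompact P.dom := isCompact_dom

lemma bounded_image : Bornology.IsBounded (P.K '' P.dom) :=
  (P.compact_dom.image_of_continuousOn P.isPH.cont).isBounded

lemma loop_spec (hR : R ∈ P.Rs) : P.loop R ∈ C.F ∧ (P.loop R).a = R.1.1 ∧
    (P.loop R).b = R.1.2 ∧ ∀ t ∈ Set.Icc R.1.1 R.1.2, P.K (t, R.2.2) = (P.loop R).f t := by
  apply loopOf_spec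
  obtain ⟨-, g, hg, h1, h2, h3⟩ := P.good R hR
  exact ⟨g, hg, h1, h2, by rw [h1, h2] at h3; exact h3⟩

lemma corner_mem_bdry (hR : R ∈ P.Rs) :
    (R.1.1, R.2.1) ∈ BdryRect R.1.1 R.1.2 R.2.1 R.2.2 := by
  obtain ⟨-, h2, -, -, h5, -⟩ := P.hole_bounds hR
  constructor
  · exact mem_rect.2 ⟨⟨le_refl _, h2.le⟩, ⟨le_refl _, h5.le⟩⟩
  · intro h
    exact (lt_irrefl R.1.1) (mem_openRect.1 h).1.1

lemma top_mem_bdry (hR : R ∈ P.Rs) {t : ℝ} (ht : t ∈ Set.Icc R.1.1 R.1.2) :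
    (t, R.2.2) ∈ BdryRect R.1.1 R.1.2 R.2.1 R.2.2 := by
  obtain ⟨-, h2, -, -, h5, -⟩ := P.hole_bounds hR
  constructor
  · exact mem_rect.2 ⟨ht, ⟨h5.le, le_refl _⟩⟩
  · intro h
    exact (lt_irrefl R.2.2) (mem_openRect.1 h).2.2

lemma corner_eq_loop (hR : R ∈ P.Rs) :
    P.K (R.1.1, R.2.1) = (P.loop R).f R.1.1 := by
  obtain ⟨-, h2, -, -, h5, -⟩ := P.hole_bounds hR
  obtain ⟨-, -, -, htop⟩ := P.loop_spec hR
  have hside := (P.isPH.bddR R hR).2 R.2.2 ⟨h5.le, le_refl _⟩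
  rw [← hside.1]
  exact htop R.1.1 ⟨le_refl _, h2.le⟩

/-- every boundary value of a hole is a value of its loop. -/
lemma bdry_val_mem_loop (hR : R ∈ P.Rs) {z : ℝ × ℝ}
    (hz : z ∈ BdryRect R.1.1 R.1.2 R.2.1 R.2.2) :
    P.K z ∈ (P.loop R).f '' Set.Icc R.1.1 R.1.2 := by
  obtain ⟨-, h2, -, -, h5, -⟩ := P.hole_bounds hR
  obtain ⟨-, -, -, htop⟩ := P.loop_spec hR
  have hcorner : (P.loop R).f R.1.1 ∈ (P.loop R).f '' Set.Icc R.1.1 R.1.2 :=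
    ⟨R.1.1, ⟨le_refl _, h2.le⟩, rfl⟩
  have hzr := hz.1
  obtain ⟨⟨hz1, hz2⟩, hz3, hz4⟩ := mem_rect.1 hzr
  have hzz : z = (z.1, z.2) := rfl
  rcases (mem_bdryRect_iff hzr).1 hz with e | e | e | e
  · rw [hzz, e, (P.isPH.bddR R hR).2 z.2 ⟨hz3, hz4⟩ |>.1, corner_eq_loop P hR]
    exact hcorner
  · rw [hzz, e, (P.isPH.bddR R hR).2 z.2 ⟨hz3, hz4⟩ |>.2, corner_eq_loop P hR]
    exact hcorner
  · rw [hzz, e, (P.isPH.bddR R hR).1 z.1 ⟨hz1, hz2⟩, corner_eq_loop P hR]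
    exact hcorner
  · rw [hzz, e, htop z.1 ⟨hz1, hz2⟩]
    exact ⟨z.1, ⟨hz1, hz2⟩, rfl⟩

lemma loop_image_eq (hR : R ∈ P.Rs) :
    (P.loop R).f '' Set.Icc (P.loop R).a (P.loop R).b ⊆ P.K '' BdryRect R.1.1 R.1.2 R.2.1 R.2.2 := by
  obtain ⟨-, ha, hb, htop⟩ := P.loop_spec hR
  rintro _ ⟨t, ht, rfl⟩
  rw [ha, hb] at ht
  exact ⟨(t, R.2.2), P.top_mem_bdry hR ht, htop t ht⟩

lemma loop_diam (hR : R ∈ P.Rs) :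
    Metric.diam ((P.loop R).f '' Set.Icc (P.loop R).a (P.loop R).b) < dpp C (P.L + 1) := by
  have h1 : P.K '' BdryRect R.1.1 R.1.2 R.2.1 R.2.2 ⊆ P.K '' P.dom :=
    Set.image_mono (P.bdry_subset_dom hR)
  have hbdd : Bornology.IsBounded (P.K '' BdryRect R.1.1 R.1.2 R.2.1 R.2.2) :=
    P.bounded_image.subset h1
  calc Metric.diam ((P.loop R).f '' Set.Icc (P.loop R).a (P.loop R).b)
      ≤ Metric.diam (P.K '' BdryRect R.1.1 R.1.2 R.2.1 R.2.2) :=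
        Metric.diam_mono (P.loop_image_eq hR) hbdd
    _ < dpp C (P.L + 1) := (P.good R hR).1

lemma loop_mem_Y (hR : R ∈ P.Rs) :
    (P.loop R).f '' Set.Icc (P.loop R).a (P.loop R).b ⊆ C.Y :=
  C.hFY _ (P.loop_spec hR).1

lemma corner_mem_Y (hR : R ∈ P.Rs) : P.K (R.1.1, R.2.1) ∈ C.Y := by
  rw [P.corner_eq_loop hR]
  obtain ⟨-, ha, hb, -⟩ := P.loop_spec hR
  apply P.loop_mem_Y hR
  refine ⟨R.1.1, ?_, rfl⟩
  rw [ha, hb]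
  exact ⟨le_refl _, (P.hole_bounds hR).2.1.le⟩

lemma bdry_val_dist (hR : R ∈ P.Rs) {z z' : ℝ × ℝ}
    (hz : z ∈ BdryRect R.1.1 R.1.2 R.2.1 R.2.2) (hz' : z' ∈ BdryRect R.1.1 R.1.2 R.2.1 R.2.2) :
    dist (P.K z) (P.K z') ≤ Metric.diam ((P.loop R).f '' Set.Icc R.1.1 R.1.2) := by
  have hbdd : Bornology.IsBounded ((P.loop R).f '' Set.Icc R.1.1 R.1.2) := by
    obtain ⟨-, ha, hb, -⟩ := P.loop_spec hR
    rw [← ha, ← hb]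
    exact P.bounded_image.subset ((P.loop_image_eq hR).trans
      (Set.image_mono (P.bdry_subset_dom hR)))
  exact Metric.dist_le_diam_of_mem hbdd (P.bdry_val_mem_loop hR hz) (P.bdry_val_mem_loop hR hz')

end Piece


section Transport

variable {c d r s : ℝ}

lemma lin_pair_Ioo (hrs : r < s) (hcd : c < d) {r₁ s₁ u : ℝ} :
    u ∈ Set.Ioo (lin c d r s r₁) (lin c d r s s₁) ↔ lin r s c d u ∈ Set.Ioo r₁ s₁ := by
  have h1 := lin_mem_Ioo (a' := lin c d r s r₁) (b' := lin c d r s s₁) hrs hcd (u := u)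
  rw [lin_lin hcd hrs, lin_lin hcd hrs] at h1
  exact h1.symm

lemma lin_pair_Icc (hrs : r < s) (hcd : c < d) {r₁ s₁ u : ℝ} :
    u ∈ Set.Icc (lin c d r s r₁) (lin c d r s s₁) ↔ lin r s c d u ∈ Set.Icc r₁ s₁ := by
  have h1 := lin_mem_Icc (a' := lin c d r s r₁) (b' := lin c d r s s₁) hrs hcd (u := u)
  rw [lin_lin hcd hrs, lin_lin hcd hrs] at h1
  exact h1.symm

lemma lin_mem_Icc_base (hrs : r < s) (hcd : c < d) {u : ℝ} (hu : u ∈ Set.Icc r s) :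
    lin r s c d u ∈ Set.Icc c d := by
  have h1 := (lin_mem_Icc (a' := r) (b' := s) hrs hcd (u := u)).2 hu
  rwa [lin_left, lin_right hrs] at h1

/-- vertical transport map, from absolute coordinates to local ones. -/
noncomputable def tmap (c d r s : ℝ) : ℝ × ℝ → ℝ × ℝ := fun z => (z.1, lin r s c d z.2)

/-- transport of hole coordinates from local to absolute. -/
noncomputable def tAbs (c d r s : ℝ) : ((ℝ × ℝ) × (ℝ × ℝ)) → ((ℝ × ℝ) × (ℝ × ℝ)) :=
  fun S => ((S.1.1, S.1.2), (lin c d r s S.2.1, lin c d r s S.2.2))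

lemma tmap_continuous : Continuous (tmap c d r s) :=
  continuous_fst.prodMk (lin_continuous.comp continuous_snd)

lemma tmap_mem_open (hrs : r < s) (hcd : c < d) {S : (ℝ × ℝ) × (ℝ × ℝ)} {z : ℝ × ℝ} :
    z ∈ OpenRect (tAbs c d r s S).1.1 (tAbs c d r s S).1.2 (tAbs c d r s S).2.1
      (tAbs c d r s S).2.2 ↔
    tmap c d r s z ∈ OpenRect S.1.1 S.1.2 S.2.1 S.2.2 := by
  simp only [tAbs, tmap, mem_openRect]
  exact and_congr Iff.rfl (lin_pair_Ioo hrs hcd)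

lemma tmap_mem_holeRect (hrs : r < s) (hcd : c < d) {S : (ℝ × ℝ) × (ℝ × ℝ)} {z : ℝ × ℝ} :
    z ∈ Rect (tAbs c d r s S).1.1 (tAbs c d r s S).1.2 (tAbs c d r s S).2.1
      (tAbs c d r s S).2.2 ↔
    tmap c d r s z ∈ Rect S.1.1 S.1.2 S.2.1 S.2.2 := by
  simp only [tAbs, tmap, mem_rect]
  exact and_congr Iff.rfl (lin_pair_Icc hrs hcd)

lemma tmap_mem_baseRect (hrs : r < s) (hcd : c < d) {p q : ℝ} {z : ℝ × ℝ} :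
    z ∈ Rect p q r s ↔ tmap c d r s z ∈ Rect p q c d := by
  simp only [tmap, mem_rect]
  refine and_congr Iff.rfl ?_
  constructor
  · intro h; exact lin_mem_Icc_base hrs hcd h
  · intro h
    have h2 := (lin_mem_Icc (a' := r) (b' := s) hrs hcd (u := z.2)).1 (by
      rwa [lin_left, lin_right hrs])
    exact h2

variable {C : Ctx X}

lemma tmap_mapsTo_dom (hrs : r < s) (hcd : c < d) {p q : ℝ}
    {Rs : Set ((ℝ × ℝ) × (ℝ × ℝ))} {z : ℝ × ℝ}
    (hz : z ∈ Dom p q r s (tAbs c d r s '' Rs)) : tmap c d r s z ∈ Dom p q c d Rs := by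
  obtain ⟨hz1, hz2⟩ := hz
  refine ⟨(tmap_mem_baseRect hrs hcd).1 hz1, ?_⟩
  intro hmem
  simp only [Set.mem_iUnion] at hmem
  obtain ⟨S, hS, hzS⟩ := hmem
  apply hz2
  simp only [Set.mem_iUnion]
  exact ⟨tAbs c d r s S, ⟨S, hS, rfl⟩, (tmap_mem_open hrs hcd).2 hzS⟩

/-- Vertical transport of a piece to a new vertical interval `[r,s]`. -/
noncomputable def Piece.vtransport (P0 : Piece C) {r s : ℝ} (hrs : r < s) : Piece C where
  p := P0.p
  q := P0.q
  r := r
  s := s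
  hpq := P0.hpq
  hrs := hrs
  K := fun z => P0.K (tmap P0.r P0.s r s z)
  Rs := tAbs P0.r P0.s r s '' P0.Rs
  L := P0.L
  isPH := by
    have hcd := P0.hrs
    constructor
    · rintro _ ⟨S, hS, rfl⟩
      obtain ⟨h1, h2, h3, h4, h5, h6⟩ := P0.isPH.sub S hS
      have hm := (lin_strictMono hcd hrs)
      refine ⟨h1, h2, h3, ?_, hm h5, ?_⟩
      · have := hm.monotone h4
        rwa [lin_left] at this
      · have := hm.monotone h6
        rwa [lin_right hcd] at this
    · rintro _ ⟨S, hS, rfl⟩ _ ⟨S', hS', rfl⟩ hne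
      have hSne : S ≠ S' := fun h => hne (by rw [h])
      rw [Set.disjoint_left]
      intro z hz hz'
      have h1 := (tmap_mem_open hrs hcd).1 hz
      have h2 := (tmap_mem_open hrs hcd).1 hz'
      exact Set.disjoint_left.1 (P0.isPH.disj S hS S' hS' hSne) h1 h2
    · exact P0.isPH.cont.comp tmap_continuous.continuousOn
        (fun z hz => tmap_mapsTo_dom hrs hcd hz)
    · constructor
      · intro t ht
        show P0.K (t, lin r s P0.r P0.s r) = P0.K (P0.p, lin r s P0.r P0.s r)
        rw [lin_left]
        exact P0.isPH.bdd.1 t ht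
      · intro u hu
        have h1 : lin r s P0.r P0.s u ∈ Set.Icc P0.r P0.s := lin_mem_Icc_base hrs hcd hu
        have h2 := P0.isPH.bdd.2 _ h1
        show P0.K (P0.p, lin r s P0.r P0.s u) = P0.K (P0.p, lin r s P0.r P0.s r) ∧
          P0.K (P0.q, lin r s P0.r P0.s u) = P0.K (P0.p, lin r s P0.r P0.s r)
        rw [lin_left]
        exact h2
    · rintro _ ⟨S, hS, rfl⟩
      have hb := P0.isPH.bddR S hS
      constructor
      · intro t ht
        show P0.K (tmap P0.r P0.s r s (t, (tAbs P0.r P0.s r s S).2.1)) =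
          P0.K (tmap P0.r P0.s r s ((tAbs P0.r P0.s r s S).1.1, (tAbs P0.r P0.s r s S).2.1))
        simp only [tmap, tAbs]
        rw [lin_lin hcd hrs]
        exact hb.1 t ht
      · intro u hu
        have h1 : lin r s P0.r P0.s u ∈ Set.Icc S.2.1 S.2.2 := (lin_pair_Icc hrs hcd).1 hu
        have h2 := hb.2 _ h1
        show P0.K ((S.1.1 : ℝ), lin r s P0.r P0.s u) =
            P0.K (S.1.1, lin r s P0.r P0.s (lin P0.r P0.s r s S.2.1)) ∧
          P0.K (S.1.2, lin r s P0.r P0.s u) =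
            P0.K (S.1.1, lin r s P0.r P0.s (lin P0.r P0.s r s S.2.1))
        rw [lin_lin hcd hrs]
        exact h2
  good := by
    have hcd := P0.hrs
    rintro _ ⟨S, hS, rfl⟩
    have himg : (fun z => P0.K (tmap P0.r P0.s r s z)) ''
        BdryRect (tAbs P0.r P0.s r s S).1.1 (tAbs P0.r P0.s r s S).1.2
          (tAbs P0.r P0.s r s S).2.1 (tAbs P0.r P0.s r s S).2.2 ⊆
        P0.K '' BdryRect S.1.1 S.1.2 S.2.1 S.2.2 := by
      rintro _ ⟨z, ⟨hz1, hz2⟩, rfl⟩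
      refine ⟨tmap P0.r P0.s r s z, ⟨(tmap_mem_holeRect hrs hcd).1 hz1, ?_⟩, rfl⟩
      intro hmem
      exact hz2 ((tmap_mem_open hrs hcd).2 hmem)
    constructor
    · have hbdd : Bornology.IsBounded (P0.K '' BdryRect S.1.1 S.1.2 S.2.1 S.2.2) :=
        P0.bounded_image.subset (Set.image_mono (P0.bdry_subset_dom hS))
      exact lt_of_le_of_lt (Metric.diam_mono himg hbdd) (P0.good S hS).1
    · obtain ⟨-, g, hg, h1, h2, h3⟩ := P0.good S hS
      refine ⟨g, hg, h1, h2, fun t ht => ?_⟩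
      show P0.K (t, lin r s P0.r P0.s (lin P0.r P0.s r s S.2.2)) = g.f t
      rw [lin_lin hcd hrs]
      exact h3 t ht
  hdiam := by
    have hcd := P0.hrs
    rcases P0.hdiam with h | h
    · exact Or.inl h
    · refine Or.inr ?_
      refine le_trans (Metric.diam_mono ?_ P0.bounded_image) h
      rintro _ ⟨z, hz, rfl⟩
      exact ⟨tmap P0.r P0.s r s z, tmap_mapsTo_dom hrs hcd hz, rfl⟩

end Transport


variable {C : Ctx X}

lemma diam_const_le {v : X} {s : Set (ℝ × ℝ)} {c' : ℝ} (hc' : 0 ≤ c') :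
    Metric.diam ((fun _ : ℝ × ℝ => v) '' s) ≤ c' := by
  apply Metric.diam_le_of_forall_dist_le hc'
  rintro _ ⟨z, -, rfl⟩ _ ⟨z', -, rfl⟩
  simpa using hc'

/-- Specification of a filling piece for the hole `R` of `P`. -/
def ChildSpec (P : Piece C) (R : (ℝ × ℝ) × (ℝ × ℝ)) (Q : Piece C) : Prop :=
  Q.p = R.1.1 ∧ Q.q = R.1.2 ∧ Q.r = R.2.1 ∧ Q.s = R.2.2 ∧ P.L < Q.L ∧
  (∀ z ∈ BdryRect R.1.1 R.1.2 R.2.1 R.2.2, Q.K z = P.K z) ∧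
  Metric.diam (Q.K '' Q.dom) ≤ (1/2 : ℝ) ^ Q.L ∧
  (∀ M : ℕ, Metric.diam ((P.loop R).f '' Set.Icc (P.loop R).a (P.loop R).b) < dpp C M →
    M ≤ Q.L ∨ (Q.Rs = ∅ ∧ ∀ z, Q.K z = P.K (R.1.1, R.2.1))) ∧
  Metric.diam ((P.loop R).f '' Set.Icc (P.loop R).a (P.loop R).b) < dpp C Q.L

lemma exists_child (P : Piece C) {R : (ℝ × ℝ) × (ℝ × ℝ)} (hR : R ∈ P.Rs) :
    ∃ Q : Piece C, ChildSpec P R Q := by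
  classical
  obtain ⟨h1, h2, h3, h4, h5, h6⟩ := P.hole_bounds hR
  obtain ⟨hgF, ha, hb, htop⟩ := P.loop_spec hR
  set g := P.loop R with hg
  have hdg := P.loop_diam hR
  rcases eq_or_lt_of_le (Metric.diam_nonneg (s := g.f '' Set.Icc g.a g.b)) with hconst | hpos
  · -- constant loop: fill with the constant map
    refine ⟨{ p := R.1.1
              q := R.1.2
              r := R.2.1
              s := R.2.2
              hpq := h2
              hrs := h5
              K := fun _ => P.K (R.1.1, R.2.1)
              Rs := (∅ : Set ((ℝ × ℝ) × (ℝ × ℝ)))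
              L := P.L + 1
              isPH := ?_
              good := ?_
              hdiam := ?_ }, ?_, ?_, ?_, ?_, ?_, ?_, ?_, ?_, ?_⟩
    · constructor
      · rintro R' hR'; exact absurd hR' (Set.notMem_empty R')
      · rintro R' hR'; exact absurd hR' (Set.notMem_empty R')
      · exact continuousOn_const
      · exact ⟨fun _ _ => rfl, fun _ _ => ⟨rfl, rfl⟩⟩
      · rintro R' hR'; exact absurd hR' (Set.notMem_empty R')
    · rintro R' hR'; exact absurd hR' (Set.notMem_empty R')
    · exact Or.inr (diam_const_le (by positivity))
    · rfl
    · rfl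
    · rfl
    · rfl
    · exact Nat.lt_succ_self _
    · -- boundary agreement
      intro z hz
      have hdiam0 : Metric.diam (g.f '' Set.Icc R.1.1 R.1.2) = 0 := by
        rw [← ha, ← hb]; exact hconst.symm
      have hd := P.bdry_val_dist hR hz (P.corner_mem_bdry hR)
      rw [hdiam0] at hd
      exact (dist_le_zero.1 hd).symm
    · exact diam_const_le (by positivity)
    · intro M _
      exact Or.inr ⟨rfl, fun z => rfl⟩
    · show Metric.diam (g.f '' Set.Icc g.a g.b) < _
      rw [← hconst]
      exact dpp_pos C _
  · -- nonconstant loop: fill by admissibility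
    set m := lvl C g with hm
    obtain ⟨hm1, hm2⟩ := lvl_spec C hpos hdg
    have hsmall : Metric.diam (g.f '' Set.Icc g.a g.b) < dhalf C m :=
      lt_of_lt_of_le hm2 (dpp_le_dhalf C m)
    obtain ⟨c, dd, hcd, H, Rs0, hPH, htopH, hdiamH, hgoodH⟩ :=
      dhalf_spec C m g hgF hsmall (dpp C (m+1)) (dpp_pos C (m+1))
    set Ploc : Piece C := { p := g.a
                            q := g.b
                            r := c
                            s := dd
                            hpq := g.hab
                            hrs := hcd
                            K := H
                            Rs := Rs0
                            L := m
                            isPH := hPH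
                            good := hgoodH
                            hdiam := Or.inr hdiamH.le }
      with hPloc
    set Q := Ploc.vtransport h5 with hQ
    have hQp : Q.p = R.1.1 := ha
    have hQq : Q.q = R.1.2 := hb
    have hQL : Q.L = m := rfl
    -- side values of H
    have hHtopa : H (g.a, dd) = g.f g.a := htopH g.a ⟨le_refl _, g.hab.le⟩
    have hHac : H (g.a, c) = g.f g.a := by
      have := (hPH.bdd.2 dd ⟨hcd.le, le_refl _⟩).1
      rw [← this]; exact hHtopa
    have hHside : ∀ u ∈ Set.Icc c dd, H (g.a, u) = g.f g.a ∧ H (g.b, u) = g.f g.a := by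
      intro u hu
      obtain ⟨e1, e2⟩ := hPH.bdd.2 u hu
      exact ⟨e1.trans hHac, e2.trans hHac⟩
    have hHbot : ∀ t ∈ Set.Icc g.a g.b, H (t, c) = g.f g.a := by
      intro t ht
      exact (hPH.bdd.1 t ht).trans hHac
    have hcornerP : P.K (R.1.1, R.2.1) = g.f g.a := by
      rw [P.corner_eq_loop hR, ← hg, ha]
    refine ⟨Q, hQp, hQq, rfl, rfl, ?_, ?_, ?_, ?_, ?_⟩
    · rw [hQL]; exact Nat.lt_of_lt_of_le (Nat.lt_succ_self _) hm1
    · -- boundary agreement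
      intro z hz
      obtain ⟨hzr, hzno⟩ := hz
      obtain ⟨⟨hz1, hz2⟩, hz3, hz4⟩ := mem_rect.1 hzr
      have hzIcc : z.1 ∈ Set.Icc g.a g.b := by rw [ha, hb]; exact ⟨hz1, hz2⟩
      have heIcc : lin R.2.1 R.2.2 c dd z.2 ∈ Set.Icc c dd :=
        lin_mem_Icc_base h5 hcd ⟨hz3, hz4⟩
      obtain ⟨z1, z2⟩ := z
      simp only at hz1 hz2 hz3 hz4 hzIcc heIcc
      rcases (mem_bdryRect_iff hzr).1 ⟨hzr, hzno⟩ with e | e | e | e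
      all_goals simp only at e
      · subst e
        show H (R.1.1, lin R.2.1 R.2.2 c dd z2) = P.K (R.1.1, z2)
        rw [((P.isPH.bddR R hR).2 z2 ⟨hz3, hz4⟩).1, hcornerP, ← ha]
        exact (hHside _ heIcc).1
      · subst e
        show H (R.1.2, lin R.2.1 R.2.2 c dd z2) = P.K (R.1.2, z2)
        rw [((P.isPH.bddR R hR).2 z2 ⟨hz3, hz4⟩).2, hcornerP, ← hb]
        exact (hHside _ heIcc).2
      · subst e
        show H (z1, lin R.2.1 R.2.2 c dd R.2.1) = P.K (z1, R.2.1)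
        rw [lin_left, (P.isPH.bddR R hR).1 z1 ⟨hz1, hz2⟩, hcornerP]
        exact hHbot z1 hzIcc
      · subst e
        show H (z1, lin R.2.1 R.2.2 c dd R.2.2) = P.K (z1, R.2.2)
        rw [lin_right h5, htop z1 ⟨hz1, hz2⟩]
        exact htopH z1 hzIcc
    · rcases Q.hdiam with h | h
      · exfalso
        rw [hQL] at h
        omega
      · exact h
    · intro M hM
      left
      rw [hQL, hm]
      exact lvl_ge C hpos hM
    · rw [hQL]
      exact hm2

/-- The chosen filling piece for a hole. -/
noncomputable def childP (P : Piece C) (R : (ℝ × ℝ) × (ℝ × ℝ)) : Piece C :=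
  @dite _ (R ∈ P.Rs) (Classical.dec _) (fun h => Classical.choose (exists_child P h)) (fun _ => P)

lemma childP_spec {P : Piece C} {R : (ℝ × ℝ) × (ℝ × ℝ)} (hR : R ∈ P.Rs) :
    ChildSpec P R (childP P R) := by
  rw [childP, dif_pos hR]
  exact Classical.choose_spec (exists_child P hR)


/-- Iterated evaluation, descending through holes with a given budget. -/
noncomputable def pval : ℕ → Piece C → ℝ × ℝ → X
  | 0, P, x =>
    @dite _ (∃ R ∈ P.Rs, x ∈ OpenRect R.1.1 R.1.2 R.2.1 R.2.2) (Classical.dec _)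
      (fun h => P.K ((Classical.choose h).1.1, (Classical.choose h).2.1))
      (fun _ => P.K x)
  | (n+1), P, x =>
    @dite _ (∃ R ∈ P.Rs, x ∈ OpenRect R.1.1 R.1.2 R.2.1 R.2.2) (Classical.dec _)
      (fun h => pval n (childP P (Classical.choose h)) x)
      (fun _ => P.K x)

variable {P : Piece C} {R : (ℝ × ℝ) × (ℝ × ℝ)} {x : ℝ × ℝ} {n : ℕ}

lemma pval_zero_hole (hR : R ∈ P.Rs) (hx : x ∈ OpenRect R.1.1 R.1.2 R.2.1 R.2.2) :
    pval 0 P x = P.K (R.1.1, R.2.1) := by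
  have hex : ∃ R' ∈ P.Rs, x ∈ OpenRect R'.1.1 R'.1.2 R'.2.1 R'.2.2 := ⟨R, hR, hx⟩
  rw [pval, dif_pos hex]
  obtain ⟨hc1, hc2⟩ := Classical.choose_spec hex
  rw [P.hole_unique hc1 hR hc2 hx]

lemma pval_succ_hole (hR : R ∈ P.Rs) (hx : x ∈ OpenRect R.1.1 R.1.2 R.2.1 R.2.2) :
    pval (n+1) P x = pval n (childP P R) x := by
  have hex : ∃ R' ∈ P.Rs, x ∈ OpenRect R'.1.1 R'.1.2 R'.2.1 R'.2.2 := ⟨R, hR, hx⟩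
  rw [pval, dif_pos hex]
  obtain ⟨hc1, hc2⟩ := Classical.choose_spec hex
  rw [P.hole_unique hc1 hR hc2 hx]

lemma pval_no_hole (h : ∀ R' ∈ P.Rs, x ∉ OpenRect R'.1.1 R'.1.2 R'.2.1 R'.2.2) :
    pval n P x = P.K x := by
  have hex : ¬ ∃ R' ∈ P.Rs, x ∈ OpenRect R'.1.1 R'.1.2 R'.2.1 R'.2.2 := by
    rintro ⟨R', hR', hx⟩; exact h R' hR' hx
  cases n with
  | zero => rw [pval, dif_neg hex]
  | succ n => rw [pval, dif_neg hex]

lemma not_mem_hole_of_not_mem_rect (hx : x ∉ Rect P.p P.q P.r P.s) :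
    ∀ R' ∈ P.Rs, x ∉ OpenRect R'.1.1 R'.1.2 R'.2.1 R'.2.2 := by
  intro R' hR' hmem
  exact hx (openRect_subset_rect (P.hole_open_subset hR' hmem))

lemma corner_mem_dom (P : Piece C) : ((P.p, P.r) : ℝ × ℝ) ∈ P.dom := by
  refine P.rect_minus_holes_subset_dom
    (mem_rect.2 ⟨⟨le_refl _, P.hpq.le⟩, le_refl _, P.hrs.le⟩) ?_
  intro R'' hR'' hmem
  have := P.hole_open_subset hR'' hmem
  exact (lt_irrefl P.p) (mem_openRect.1 this).1.1

lemma pval_zero_mem (P : Piece C) (x : ℝ × ℝ) (hx : x ∈ Rect P.p P.q P.r P.s) :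
    pval 0 P x ∈ P.K '' P.dom := by
  by_cases h : ∃ R' ∈ P.Rs, x ∈ OpenRect R'.1.1 R'.1.2 R'.2.1 R'.2.2
  · obtain ⟨R', hR', hxR⟩ := h
    rw [pval_zero_hole hR' hxR]
    exact ⟨(R'.1.1, R'.2.1), P.bdry_subset_dom hR' (P.corner_mem_bdry hR'), rfl⟩
  · push_neg at h
    rw [pval_no_hole h]
    exact ⟨x, P.rect_minus_holes_subset_dom hx h, rfl⟩

/-- Extract membership of `x` in the child's rectangle. -/
lemma mem_child_rect (hR : R ∈ P.Rs) (hx : x ∈ OpenRect R.1.1 R.1.2 R.2.1 R.2.2) :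
    x ∈ Rect (childP P R).p (childP P R).q (childP P R).r (childP P R).s := by
  obtain ⟨e1, e2, e3, e4, -⟩ := childP_spec hR
  rw [e1, e2, e3, e4]
  exact openRect_subset_rect hx

lemma corner_mem_child_image (hR : R ∈ P.Rs) :
    P.K (R.1.1, R.2.1) ∈ (childP P R).K '' (childP P R).dom := by
  obtain ⟨e1, e2, e3, e4, -, hagree, -⟩ := childP_spec hR
  have h1 : ((childP P R).p, (childP P R).r) ∈ (childP P R).dom := corner_mem_dom _
  refine ⟨((childP P R).p, (childP P R).r), h1, ?_⟩
  have h2 : (((childP P R).p, (childP P R).r) : ℝ × ℝ) = (R.1.1, R.2.1) := by rw [e1, e3]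
  rw [h2]
  exact hagree _ (P.corner_mem_bdry hR)

lemma half_pow_le {a b : ℕ} (h : a ≤ b) : ((1/2 : ℝ))^b ≤ (1/2)^a :=
  pow_le_pow_of_le_one (by norm_num) (by norm_num) h

lemma pval_succ_dist : ∀ (n : ℕ) (P : Piece C) (x : ℝ × ℝ),
    dist (pval n P x) (pval (n+1) P x) ≤ (1/2 : ℝ)^(P.L + n + 1) := by
  intro n
  induction n with
  | zero =>
    intro P x
    by_cases hex : ∃ R' ∈ P.Rs, x ∈ OpenRect R'.1.1 R'.1.2 R'.2.1 R'.2.2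
    · obtain ⟨R', hR', hxR⟩ := hex
      rw [pval_zero_hole hR' hxR, pval_succ_hole hR' hxR]
      obtain ⟨-, -, -, -, hL, -, hdi, -⟩ := childP_spec hR'
      have h1 := pval_zero_mem (childP P R') x (mem_child_rect hR' hxR)
      have h2 := corner_mem_child_image hR'
      calc dist (P.K (R'.1.1, R'.2.1)) (pval 0 (childP P R') x)
          ≤ Metric.diam ((childP P R').K '' (childP P R').dom) :=
            Metric.dist_le_diam_of_mem (childP P R').bounded_image h2 h1
        _ ≤ (1/2 : ℝ)^(childP P R').L := hdi
        _ ≤ (1/2 : ℝ)^(P.L + 0 + 1) := half_pow_le (by omega)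
    · push_neg at hex
      rw [pval_no_hole hex, pval_no_hole hex]
      simp only [dist_self]
      positivity
  | succ n ih =>
    intro P x
    by_cases hex : ∃ R' ∈ P.Rs, x ∈ OpenRect R'.1.1 R'.1.2 R'.2.1 R'.2.2
    · obtain ⟨R', hR', hxR⟩ := hex
      rw [pval_succ_hole hR' hxR, pval_succ_hole hR' hxR]
      obtain ⟨-, -, -, -, hL, -⟩ := childP_spec hR'
      calc dist (pval n (childP P R') x) (pval (n+1) (childP P R') x)
          ≤ (1/2 : ℝ)^((childP P R').L + n + 1) := ih (childP P R') x
        _ ≤ (1/2 : ℝ)^(P.L + (n+1) + 1) := half_pow_le (by omega)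
    · push_neg at hex
      rw [pval_no_hole hex, pval_no_hole hex]
      simp only [dist_self]
      positivity

lemma pval_dist_le (P : Piece C) (x : ℝ × ℝ) :
    ∀ n m : ℕ, n ≤ m →
      dist (pval n P x) (pval m P x) ≤ (1/2 : ℝ)^(P.L + n) - (1/2)^(P.L + m) := by
  intro n m hnm
  induction m, hnm using Nat.le_induction with
  | base => simp
  | succ m hnm ih =>
    calc dist (pval n P x) (pval (m+1) P x)
        ≤ dist (pval n P x) (pval m P x) + dist (pval m P x) (pval (m+1) P x) :=
          dist_triangle _ _ _
      _ ≤ ((1/2 : ℝ)^(P.L + n) - (1/2)^(P.L + m)) + (1/2)^(P.L + m + 1) := by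
          exact add_le_add ih (pval_succ_dist m P x)
      _ ≤ (1/2 : ℝ)^(P.L + n) - (1/2)^(P.L + (m+1)) := by
          have : (P.L + (m+1)) = (P.L + m) + 1 := by omega
          rw [this, pow_succ]
          nlinarith [pow_pos (by norm_num : (0:ℝ) < 1/2) (P.L + m)]

lemma pval_cauchy (P : Piece C) (x : ℝ × ℝ) : CauchySeq (fun n => pval n P x) := by
  rw [Metric.cauchySeq_iff']
  intro ε hε
  obtain ⟨N, hN⟩ := exists_pow_lt_of_lt_one hε (by norm_num : (1/2 : ℝ) < 1)
  refine ⟨N, fun n hn => ?_⟩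
  rw [dist_comm]
  calc dist (pval N P x) (pval n P x)
      ≤ (1/2 : ℝ)^(P.L + N) - (1/2)^(P.L + n) := pval_dist_le P x N n hn
    _ ≤ (1/2 : ℝ)^(P.L + N) := by
        have : (0:ℝ) < (1/2)^(P.L + n) := by positivity
        linarith
    _ ≤ (1/2 : ℝ)^N := half_pow_le (by omega)
    _ < ε := hN

lemma pval_stab_or_mem : ∀ (n : ℕ) (P : Piece C) (x : ℝ × ℝ),
    (∀ m, n ≤ m → pval m P x = pval n P x) ∨ pval n P x ∈ C.Y := by
  intro n
  induction n with
  | zero =>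
    intro P x
    by_cases hex : ∃ R' ∈ P.Rs, x ∈ OpenRect R'.1.1 R'.1.2 R'.2.1 R'.2.2
    · obtain ⟨R', hR', hxR⟩ := hex
      right
      rw [pval_zero_hole hR' hxR]
      exact P.corner_mem_Y hR'
    · push_neg at hex
      left
      intro m _
      rw [pval_no_hole hex, pval_no_hole hex]
  | succ n ih =>
    intro P x
    by_cases hex : ∃ R' ∈ P.Rs, x ∈ OpenRect R'.1.1 R'.1.2 R'.2.1 R'.2.2
    · obtain ⟨R', hR', hxR⟩ := hex
      rcases ih (childP P R') x with h | h
      · left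
        intro m hm
        obtain ⟨m', rfl⟩ : ∃ m', m = m' + 1 := ⟨m - 1, by omega⟩
        rw [pval_succ_hole hR' hxR, pval_succ_hole hR' hxR]
        exact h m' (by omega)
      · right
        rw [pval_succ_hole hR' hxR]
        exact h
    · push_neg at hex
      left
      intro m _
      rw [pval_no_hole hex, pval_no_hole hex]

lemma exists_Hval (P : Piece C) (x : ℝ × ℝ) :
    ∃ v, Filter.Tendsto (fun n => pval n P x) Filter.atTop (nhds v) := by
  by_cases hall : ∀ n, pval n P x ∈ C.Y
  · obtain ⟨v, -, hv⟩ := cauchySeq_tendsto_of_isComplete C.hY hall (pval_cauchy P x)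
    exact ⟨v, hv⟩
  · push_neg at hall
    obtain ⟨n, hn⟩ := hall
    rcases pval_stab_or_mem n P x with h | h
    · refine ⟨pval n P x, ?_⟩
      refine Filter.Tendsto.congr' ?_ (tendsto_const_nhds (x := pval n P x))
      rw [Filter.EventuallyEq, Filter.eventually_atTop]
      exact ⟨n, fun m hm => (h m hm).symm⟩
    · exact absurd h hn

/-- The limit map. -/
noncomputable def Hval (P : Piece C) (x : ℝ × ℝ) : X := Classical.choose (exists_Hval P x)

lemma Hval_tendsto (P : Piece C) (x : ℝ × ℝ) :
    Filter.Tendsto (fun n => pval n P x) Filter.atTop (nhds (Hval P x)) :=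
  Classical.choose_spec (exists_Hval P x)

lemma Hval_dist (P : Piece C) (x : ℝ × ℝ) (n : ℕ) :
    dist (Hval P x) (pval n P x) ≤ (1/2 : ℝ)^(P.L + n) := by
  have h1 : Filter.Tendsto (fun m => dist (pval m P x) (pval n P x)) Filter.atTop
      (nhds (dist (Hval P x) (pval n P x))) :=
    (Hval_tendsto P x).dist tendsto_const_nhds
  refine le_of_tendsto h1 ?_
  rw [Filter.eventually_atTop]
  refine ⟨n, fun m hm => ?_⟩
  rw [dist_comm]
  have := pval_dist_le P x n m hm
  have h2 : (0:ℝ) < (1/2)^(P.L + m) := by positivity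
  linarith

lemma Hval_no_hole (h : ∀ R' ∈ P.Rs, x ∉ OpenRect R'.1.1 R'.1.2 R'.2.1 R'.2.2) :
    Hval P x = P.K x := by
  refine tendsto_nhds_unique (Hval_tendsto P x) ?_
  refine Filter.Tendsto.congr' ?_ (tendsto_const_nhds (x := P.K x))
  rw [Filter.EventuallyEq, Filter.eventually_atTop]
  exact ⟨0, fun m _ => (pval_no_hole h).symm⟩

lemma Hval_hole (hR : R ∈ P.Rs) (hx : x ∈ OpenRect R.1.1 R.1.2 R.2.1 R.2.2) :
    Hval P x = Hval (childP P R) x := by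
  have h1 : Filter.Tendsto (fun n => pval (n+1) P x) Filter.atTop
      (nhds (Hval (childP P R) x)) := by
    refine Filter.Tendsto.congr' ?_ (Hval_tendsto (childP P R) x)
    rw [Filter.EventuallyEq, Filter.eventually_atTop]
    exact ⟨0, fun m _ => (pval_succ_hole hR hx).symm⟩
  have h2 : Filter.Tendsto (fun n => pval (n+1) P x) Filter.atTop (nhds (Hval P x)) :=
    (Hval_tendsto P x).comp (Filter.tendsto_add_atTop_nat 1)
  exact tendsto_nhds_unique h2 h1

/-- Distance from the limit value inside a hole to the corner value. -/
lemma Hval_hole_dist (hR : R ∈ P.Rs) (hx : x ∈ OpenRect R.1.1 R.1.2 R.2.1 R.2.2) :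
    dist (Hval P x) (P.K (R.1.1, R.2.1)) ≤ 2 * (1/2 : ℝ)^((childP P R).L) := by
  rw [Hval_hole hR hx]
  obtain ⟨-, -, -, -, -, -, hdi, -⟩ := childP_spec hR
  calc dist (Hval (childP P R) x) (P.K (R.1.1, R.2.1))
      ≤ dist (Hval (childP P R) x) (pval 0 (childP P R) x) +
        dist (pval 0 (childP P R) x) (P.K (R.1.1, R.2.1)) := dist_triangle _ _ _
    _ ≤ (1/2 : ℝ)^((childP P R).L + 0) + (1/2)^((childP P R).L) := by
        refine add_le_add (Hval_dist _ _ 0) ?_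
        exact le_trans (Metric.dist_le_diam_of_mem (childP P R).bounded_image
          (pval_zero_mem _ _ (mem_child_rect hR hx)) (corner_mem_child_image hR)) hdi
    _ = 2 * (1/2 : ℝ)^((childP P R).L) := by ring_nf

lemma Hval_hole_const (hR : R ∈ P.Rs) (hx : x ∈ OpenRect R.1.1 R.1.2 R.2.1 R.2.2)
    (h : (childP P R).Rs = ∅ ∧ ∀ z, (childP P R).K z = P.K (R.1.1, R.2.1)) :
    Hval P x = P.K (R.1.1, R.2.1) := by
  rw [Hval_hole hR hx, Hval_no_hole ?_, h.2]
  intro R' hR'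
  rw [h.1] at hR'
  exact absurd hR' (Set.notMem_empty R')


/-- Diameter of the loop attached to a hole. -/
noncomputable def loopDiam (P : Piece C) (R : (ℝ × ℝ) × (ℝ × ℝ)) : ℝ :=
  Metric.diam ((P.loop R).f '' Set.Icc (P.loop R).a (P.loop R).b)

/-- Truncated evaluation: descend only through holes whose loop is at least
`dpp C M` in diameter, with fuel `k`. -/
noncomputable def gval (M : ℕ) : ℕ → Piece C → ℝ × ℝ → X
  | 0, P, _ => P.K (P.p, P.r)
  | (k+1), P, x =>
    @dite _ (∃ R ∈ P.Rs, x ∈ OpenRect R.1.1 R.1.2 R.2.1 R.2.2) (Classical.dec _)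
      (fun h =>
        @ite _ (loopDiam P (Classical.choose h) < dpp C M) (Classical.dec _)
          (P.K ((Classical.choose h).1.1, (Classical.choose h).2.1))
          (gval M k (childP P (Classical.choose h)) x))
      (fun _ => P.K x)

variable {M k : ℕ}

lemma gval_no_hole (h : ∀ R' ∈ P.Rs, x ∉ OpenRect R'.1.1 R'.1.2 R'.2.1 R'.2.2) :
    gval M (k+1) P x = P.K x := by
  have hex : ¬ ∃ R' ∈ P.Rs, x ∈ OpenRect R'.1.1 R'.1.2 R'.2.1 R'.2.2 := by
    rintro ⟨R', hR', hx⟩; exact h R' hR' hx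
  rw [gval, dif_neg hex]

lemma gval_hole_dead (hR : R ∈ P.Rs) (hx : x ∈ OpenRect R.1.1 R.1.2 R.2.1 R.2.2)
    (hdead : loopDiam P R < dpp C M) :
    gval M (k+1) P x = P.K (R.1.1, R.2.1) := by
  have hex : ∃ R' ∈ P.Rs, x ∈ OpenRect R'.1.1 R'.1.2 R'.2.1 R'.2.2 := ⟨R, hR, hx⟩
  rw [gval, dif_pos hex]
  obtain ⟨hc1, hc2⟩ := Classical.choose_spec hex
  have he : Classical.choose hex = R := P.hole_unique hc1 hR hc2 hx
  rw [he, if_pos hdead]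

lemma gval_hole_live (hR : R ∈ P.Rs) (hx : x ∈ OpenRect R.1.1 R.1.2 R.2.1 R.2.2)
    (hlive : ¬ loopDiam P R < dpp C M) :
    gval M (k+1) P x = gval M k (childP P R) x := by
  have hex : ∃ R' ∈ P.Rs, x ∈ OpenRect R'.1.1 R'.1.2 R'.2.1 R'.2.2 := ⟨R, hR, hx⟩
  rw [gval, dif_pos hex]
  obtain ⟨hc1, hc2⟩ := Classical.choose_spec hex
  have he : Classical.choose hex = R := P.hole_unique hc1 hR hc2 hx
  rw [he, if_neg hlive]

lemma live_child_lvl_lt (hR : R ∈ P.Rs) (hlive : ¬ loopDiam P R < dpp C M) :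
    (childP P R).L < M := by
  obtain ⟨-, -, -, -, -, -, -, -, hlvl⟩ := childP_spec hR
  by_contra h
  push_neg at h
  exact hlive (lt_of_lt_of_le hlvl (dpp_antitone C h))

lemma Hval_gval_dist (M : ℕ) (hM1 : 1 ≤ M) : ∀ (k : ℕ) (P : Piece C) (x : ℝ × ℝ),
    M ≤ P.L + k → x ∈ Rect P.p P.q P.r P.s →
    dist (Hval P x) (gval M k P x) ≤ 2 * (1/2 : ℝ)^M := by
  intro k
  induction k with
  | zero =>
    intro P x hfuel hx
    simp only [Nat.add_zero] at hfuel
    have hL : P.L ≠ 0 := by omega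
    have hdi : Metric.diam (P.K '' P.dom) ≤ (1/2 : ℝ)^P.L := by
      rcases P.hdiam with h | h
      · exact absurd h hL
      · exact h
    have h1 : dist (Hval P x) (pval 0 P x) ≤ (1/2 : ℝ)^P.L := by
      have := Hval_dist P x 0
      simpa using this
    have h2 : dist (pval 0 P x) (P.K (P.p, P.r)) ≤ (1/2 : ℝ)^P.L :=
      le_trans (Metric.dist_le_diam_of_mem P.bounded_image (pval_zero_mem P x hx)
        ⟨(P.p, P.r), corner_mem_dom P, rfl⟩) hdi
    calc dist (Hval P x) (gval M 0 P x)
        ≤ dist (Hval P x) (pval 0 P x) + dist (pval 0 P x) (P.K (P.p, P.r)) :=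
          dist_triangle _ _ _
      _ ≤ (1/2 : ℝ)^P.L + (1/2)^P.L := add_le_add h1 h2
      _ ≤ (1/2 : ℝ)^M + (1/2)^M := add_le_add (half_pow_le hfuel) (half_pow_le hfuel)
      _ = 2 * (1/2 : ℝ)^M := by ring
  | succ k ih =>
    intro P x hfuel hx
    by_cases hex : ∃ R' ∈ P.Rs, x ∈ OpenRect R'.1.1 R'.1.2 R'.2.1 R'.2.2
    · obtain ⟨R', hR', hxR⟩ := hex
      by_cases hdead : loopDiam P R' < dpp C M
      · rw [gval_hole_dead hR' hxR hdead]
        obtain ⟨-, -, -, -, -, -, -, hM', -⟩ := childP_spec hR'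
        rcases hM' M hdead with hle | hconst
        · calc dist (Hval P x) (P.K (R'.1.1, R'.2.1))
              ≤ 2 * (1/2 : ℝ)^((childP P R').L) := Hval_hole_dist hR' hxR
            _ ≤ 2 * (1/2 : ℝ)^M := by
                have := half_pow_le hle
                linarith
        · rw [Hval_hole_const hR' hxR hconst]
          simp only [dist_self]
          positivity
      · rw [gval_hole_live hR' hxR hdead, Hval_hole hR' hxR]
        obtain ⟨-, -, -, -, hL, -⟩ := childP_spec hR'
        exact ih (childP P R') x (by omega) (mem_child_rect hR' hxR)
    · push_neg at hex
      rw [gval_no_hole hex, Hval_no_hole hex]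
      simp only [dist_self]
      positivity


lemma live_finite (M : ℕ) (P : Piece C) :
    {R' | R' ∈ P.Rs ∧ ¬ loopDiam P R' < dpp C M}.Finite := by
  classical
  obtain ⟨σ, hσ, hUC⟩ := Metric.uniformContinuousOn_iff.1
    (P.compact_dom.uniformContinuousOn_of_continuous P.isPH.cont) (dpp C M / 4)
    (by have := dpp_pos C M; linarith)
  set Big := {R' | R' ∈ P.Rs ∧ σ ≤ R'.1.2 - R'.1.1 ∧ σ ≤ R'.2.2 - R'.2.1} with hBig
  have hsub : {R' | R' ∈ P.Rs ∧ ¬ loopDiam P R' < dpp C M} ⊆ Big := by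
    rintro R' ⟨hR', hlive⟩
    refine ⟨hR', ?_⟩
    by_contra hc
    apply hlive
    rw [not_and_or] at hc
    obtain ⟨-, ha, hb, htop⟩ := P.loop_spec hR'
    have himg : (P.loop R').f '' Set.Icc (P.loop R').a (P.loop R').b =
        (P.loop R').f '' Set.Icc R'.1.1 R'.1.2 := by rw [ha, hb]
    have hkey : ∀ t ∈ Set.Icc R'.1.1 R'.1.2, ∀ t' ∈ Set.Icc R'.1.1 R'.1.2,
        dist ((P.loop R').f t) ((P.loop R').f t') ≤ dpp C M / 2 := by
      intro t ht t' ht'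
      rw [← htop t ht, ← htop t' ht']
      have hmem : ∀ u ∈ Set.Icc R'.1.1 R'.1.2, ((u, R'.2.2) : ℝ × ℝ) ∈ P.dom :=
        fun u hu => P.bdry_subset_dom hR' (P.top_mem_bdry hR' hu)
      have hmemb : ∀ u ∈ Set.Icc R'.1.1 R'.1.2, ((u, R'.2.1) : ℝ × ℝ) ∈ P.dom := by
        intro u hu
        refine P.bdry_subset_dom hR' ?_
        obtain ⟨-, h2, -, -, h5, -⟩ := P.hole_bounds hR'
        refine ⟨mem_rect.2 ⟨hu, le_refl _, h5.le⟩, fun hop => ?_⟩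
        exact (lt_irrefl R'.2.1) (mem_openRect.1 hop).2.1
      rcases hc with h | h
      · push_neg at h
        have hd : dist ((t, R'.2.2) : ℝ × ℝ) ((t', R'.2.2) : ℝ × ℝ) < σ := by
          rw [Prod.dist_eq]
          simp only [dist_self]
          obtain ⟨ht1, ht2⟩ := ht
          obtain ⟨ht1', ht2'⟩ := ht'
          have h1 : dist t t' < σ := by
            rw [Real.dist_eq, abs_sub_lt_iff]
            constructor <;> linarith
          exact max_lt h1 hσ
        have := hUC _ (hmem t ht) _ (hmem t' ht') hd
        have hp := dpp_pos C M
        linarith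
      · push_neg at h
        obtain ⟨-, h2, -, -, h5, -⟩ := P.hole_bounds hR'
        have hd : ∀ u ∈ Set.Icc R'.1.1 R'.1.2,
            dist (P.K (u, R'.2.2)) (P.K (u, R'.2.1)) < dpp C M / 4 := by
          intro u hu
          refine hUC _ (hmem u hu) _ (hmemb u hu) ?_
          rw [Prod.dist_eq]
          simp only [dist_self]
          have h1 : dist R'.2.2 R'.2.1 < σ := by
            rw [Real.dist_eq, abs_sub_lt_iff]
            constructor <;> linarith
          exact max_lt hσ h1
        have hb1 := (P.isPH.bddR R' hR').1 t ht
        have hb2 := (P.isPH.bddR R' hR').1 t' ht'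
        have d1 := hd t ht
        have d2 := hd t' ht'
        calc dist (P.K (t, R'.2.2)) (P.K (t', R'.2.2))
            ≤ dist (P.K (t, R'.2.2)) (P.K (t, R'.2.1)) +
              dist (P.K (t, R'.2.1)) (P.K (t', R'.2.2)) := dist_triangle _ _ _
          _ ≤ dist (P.K (t, R'.2.2)) (P.K (t, R'.2.1)) +
              (dist (P.K (t, R'.2.1)) (P.K (t', R'.2.1)) +
               dist (P.K (t', R'.2.1)) (P.K (t', R'.2.2))) := by
              have := dist_triangle (P.K (t, R'.2.1)) (P.K (t', R'.2.1)) (P.K (t', R'.2.2))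
              linarith
          _ ≤ dpp C M / 2 := by
              rw [hb1] at d1
              rw [hb2] at d2
              rw [hb1, hb2]
              simp only [dist_self, zero_add]
              rw [dist_comm (P.K (R'.1.1, R'.2.1))]
              linarith
    rw [loopDiam, himg]
    have hp := dpp_pos C M
    have hhalf : (0:ℝ) ≤ dpp C M / 2 := by linarith
    have hlt : dpp C M / 2 < dpp C M := by linarith
    refine lt_of_le_of_lt (Metric.diam_le_of_forall_dist_le hhalf ?_) hlt
    rintro _ ⟨t, ht, rfl⟩ _ ⟨t', ht', rfl⟩
    exact hkey t ht t' ht'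
  refine Set.Finite.subset ?_ hsub
  by_contra hinf
  have hinf' : Big.Infinite := hinf
  set e := hinf'.natEmbedding with he
  have hdisj : Pairwise (Function.onFun Disjoint fun n : ℕ =>
      OpenRect (e n).1.1.1 (e n).1.1.2 (e n).1.2.1 (e n).1.2.2) := by
    intro n m hnm
    have hne : ((e n) : (ℝ × ℝ) × (ℝ × ℝ)) ≠ ((e m) : (ℝ × ℝ) × (ℝ × ℝ)) := by
      intro h
      exact hnm (e.injective (Subtype.ext h))
    exact P.isPH.disj _ (e n).2.1 _ (e m).2.1 hne
  have hmeas : ∀ n : ℕ, MeasurableSet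
      (OpenRect (e n).1.1.1 (e n).1.1.2 (e n).1.2.1 (e n).1.2.2) :=
    fun n => isOpen_openRect.measurableSet
  have hvol : ∀ n : ℕ, ENNReal.ofReal σ * ENNReal.ofReal σ ≤
      MeasureTheory.volume (OpenRect (e n).1.1.1 (e n).1.1.2 (e n).1.2.1 (e n).1.2.2) := by
    intro n
    rw [OpenRect, show (MeasureTheory.volume : MeasureTheory.Measure (ℝ × ℝ)) =
      (MeasureTheory.volume : MeasureTheory.Measure ℝ).prod MeasureTheory.volume from rfl,
      MeasureTheory.Measure.prod_prod, Real.volume_Ioo, Real.volume_Ioo]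
    exact mul_le_mul' (ENNReal.ofReal_le_ofReal (e n).2.2.1)
      (ENNReal.ofReal_le_ofReal (e n).2.2.2)
  have htop : MeasureTheory.volume (⋃ n : ℕ,
      OpenRect (e n).1.1.1 (e n).1.1.2 (e n).1.2.1 (e n).1.2.2) = ⊤ := by
    rw [MeasureTheory.measure_iUnion hdisj hmeas]
    rw [← top_le_iff]
    calc (⊤ : ENNReal) = ∑' _ : ℕ, ENNReal.ofReal σ * ENNReal.ofReal σ :=
          (ENNReal.tsum_const_eq_top_of_ne_zero (by
            simp only [ne_eq, mul_eq_zero, ENNReal.ofReal_eq_zero, not_or, not_le]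
            exact ⟨hσ, hσ⟩)).symm
      _ ≤ _ := ENNReal.tsum_le_tsum hvol
  have hle : MeasureTheory.volume (⋃ n : ℕ,
      OpenRect (e n).1.1.1 (e n).1.1.2 (e n).1.2.1 (e n).1.2.2) ≤
      MeasureTheory.volume (Rect P.p P.q P.r P.s) := by
    apply MeasureTheory.measure_mono
    refine Set.iUnion_subset fun n => ?_
    exact (P.hole_open_subset (e n).2.1).trans openRect_subset_rect
  rw [htop] at hle
  have : MeasureTheory.volume (Rect P.p P.q P.r P.s) < ⊤ := by
    rw [Rect, show (MeasureTheory.volume : MeasureTheory.Measure (ℝ × ℝ)) =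
      (MeasureTheory.volume : MeasureTheory.Measure ℝ).prod MeasureTheory.volume from rfl,
      MeasureTheory.Measure.prod_prod, Real.volume_Icc, Real.volume_Icc]
    exact ENNReal.mul_lt_top ENNReal.ofReal_lt_top ENNReal.ofReal_lt_top
  rw [top_le_iff] at hle
  rw [hle] at this
  exact lt_irrefl _ this

/-- Uniform radius over a finite set. -/
lemma exists_uniform_rho {A : Type*} {S : Set A} (hS : S.Finite)
    (Pred : A → ℝ → Prop)
    (h : ∀ a ∈ S, ∃ ρ > (0:ℝ), Pred a ρ)
    (hmono : ∀ a ρ ρ', 0 < ρ' → ρ' ≤ ρ → Pred a ρ → Pred a ρ') :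
    ∃ ρ > (0:ℝ), ∀ a ∈ S, Pred a ρ := by
  revert h
  refine Set.Finite.induction_on S hS ?_ ?_
  · intro _
    exact ⟨1, one_pos, fun a ha => absurd ha (Set.notMem_empty a)⟩
  · intro a S' haS hS' ih h
    obtain ⟨ρ₁, hρ₁, h₁⟩ := h a (Set.mem_insert a S')
    obtain ⟨ρ₂, hρ₂, h₂⟩ := ih (fun b hb => h b (Set.mem_insert_of_mem a hb))
    refine ⟨min ρ₁ ρ₂, lt_min hρ₁ hρ₂, ?_⟩
    rintro b (rfl | hb)
    · exact hmono b ρ₁ _ (lt_min hρ₁ hρ₂) (min_le_left _ _) h₁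
    · exact hmono b ρ₂ _ (lt_min hρ₁ hρ₂) (min_le_right _ _) (h₂ b hb)


lemma loopdiam_eq (P : Piece C) {R' : (ℝ × ℝ) × (ℝ × ℝ)} (hR' : R' ∈ P.Rs) :
    Metric.diam ((P.loop R').f '' Set.Icc R'.1.1 R'.1.2) = loopDiam P R' := by
  obtain ⟨-, ha', hb', -⟩ := P.loop_spec hR'
  rw [loopDiam, ha', hb']

lemma gval_cont (M : ℕ) : ∀ (k : ℕ) (P : Piece C), M ≤ P.L + k →
    ∀ x ∈ Rect P.p P.q P.r P.s, ∀ η > (0:ℝ), ∃ ρ > (0:ℝ),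
      ∀ y ∈ Rect P.p P.q P.r P.s, dist y x < ρ →
        dist (gval M k P y) (gval M k P x) ≤ dpp C M + η := by
  intro k
  induction k with
  | zero =>
    intro P _ x _ η hη
    refine ⟨1, one_pos, fun y _ _ => ?_⟩
    rw [gval, gval, dist_self]
    have := dpp_pos C M
    linarith
  | succ k ih =>
    intro P hfuel x hx η hη
    by_cases hex : ∃ R' ∈ P.Rs, x ∈ OpenRect R'.1.1 R'.1.2 R'.2.1 R'.2.2
    · obtain ⟨R, hR, hxR⟩ := hex
      obtain ⟨ρ₀, hρ₀, hball⟩ := Metric.isOpen_iff.1 isOpen_openRect x hxR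
      by_cases hdead : loopDiam P R < dpp C M
      · refine ⟨ρ₀, hρ₀, fun y _ hdy => ?_⟩
        have hyR : y ∈ OpenRect R.1.1 R.1.2 R.2.1 R.2.2 := hball (Metric.mem_ball.2 hdy)
        rw [gval_hole_dead hR hyR hdead, gval_hole_dead hR hxR hdead, dist_self]
        have := dpp_pos C M
        linarith
      · obtain ⟨-, -, -, -, hL, -⟩ := childP_spec hR
        obtain ⟨ρ₁, hρ₁, h₁⟩ := ih (childP P R) (by omega) x (mem_child_rect hR hxR) η hη
        refine ⟨min ρ₀ ρ₁, lt_min hρ₀ hρ₁, fun y _ hdy => ?_⟩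
        have hyR : y ∈ OpenRect R.1.1 R.1.2 R.2.1 R.2.2 :=
          hball (Metric.mem_ball.2 (lt_of_lt_of_le hdy (min_le_left _ _)))
        rw [gval_hole_live hR hyR hdead, gval_hole_live hR hxR hdead]
        exact h₁ y (mem_child_rect hR hyR) (lt_of_lt_of_le hdy (min_le_right _ _))
    · push_neg at hex
      have hxdom : x ∈ P.dom := P.rect_minus_holes_subset_dom hx hex
      obtain ⟨ρ₁, hρ₁, hK⟩ := Metric.continuousWithinAt_iff.1 (P.isPH.cont x hxdom) η hη
      have hLive := live_finite M P
      set Far := {R' | (R' ∈ P.Rs ∧ ¬ loopDiam P R' < dpp C M) ∧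
        x ∉ Rect R'.1.1 R'.1.2 R'.2.1 R'.2.2} with hFar
      have hFarFin : Far.Finite := hLive.subset (fun R' hR' => hR'.1)
      set T := ⋃ R' ∈ Far, Rect R'.1.1 R'.1.2 R'.2.1 R'.2.2 with hT
      have hTclosed : IsClosed T :=
        Set.Finite.isClosed_biUnion hFarFin (fun _ _ => isClosed_rect)
      have hxT : x ∈ Tᶜ := by
        intro h
        obtain ⟨R', hR', hmem⟩ := Set.mem_iUnion₂.1 h
        exact hR'.2 hmem
      obtain ⟨ρ₂, hρ₂, hball₂⟩ := Metric.isOpen_iff.1 hTclosed.isOpen_compl x hxT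
      set Touch := {R' | (R' ∈ P.Rs ∧ ¬ loopDiam P R' < dpp C M) ∧
        x ∈ Rect R'.1.1 R'.1.2 R'.2.1 R'.2.2} with hTouch
      have hTouchFin : Touch.Finite := hLive.subset (fun R' hR' => hR'.1)
      obtain ⟨ρ₃, hρ₃, h₃⟩ := exists_uniform_rho hTouchFin
        (fun R' ρ => ∀ y ∈ Rect (childP P R').p (childP P R').q (childP P R').r
          (childP P R').s, dist y x < ρ →
          dist (gval M k (childP P R') y) (gval M k (childP P R') x) ≤ dpp C M + η)
        (by
          rintro R' ⟨⟨hR', hlive⟩, hxRect⟩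
          obtain ⟨e1, e2, e3, e4, hL, -⟩ := childP_spec hR'
          have hxc : x ∈ Rect (childP P R').p (childP P R').q (childP P R').r
              (childP P R').s := by
            rw [e1, e2, e3, e4]; exact hxRect
          exact ih (childP P R') (by omega) x hxc η hη)
        (by
          intro a ρ ρ' hρ' hle hP
          intro y hy hdy
          exact hP y hy (lt_of_lt_of_le hdy hle))
      refine ⟨min ρ₁ (min ρ₂ ρ₃), lt_min hρ₁ (lt_min hρ₂ hρ₃), fun y hy hdy => ?_⟩
      have hgx : gval M (k+1) P x = P.K x := gval_no_hole hex
      by_cases hey : ∃ R' ∈ P.Rs, y ∈ OpenRect R'.1.1 R'.1.2 R'.2.1 R'.2.2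
      · obtain ⟨R', hR', hyR⟩ := hey
        by_cases hdead : loopDiam P R' < dpp C M
        · rw [gval_hole_dead hR' hyR hdead, hgx]
          obtain ⟨-, hh2, -, -, hh5, -⟩ := P.hole_bounds hR'
          obtain ⟨z, hz, hzd⟩ := exists_bdry_between hh2 hh5 (hex R' hR') hyR
          have hzdom := P.bdry_subset_dom hR' hz
          have hzx : dist z x < ρ₁ :=
            lt_of_le_of_lt hzd (lt_of_lt_of_le hdy (min_le_left _ _))
          have h1 := hK hzdom hzx
          have h2 : dist (P.K (R'.1.1, R'.2.1)) (P.K z) ≤ loopDiam P R' := by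
            rw [← loopdiam_eq P hR']
            exact P.bdry_val_dist hR' (P.corner_mem_bdry hR') hz
          calc dist (P.K (R'.1.1, R'.2.1)) (P.K x)
              ≤ dist (P.K (R'.1.1, R'.2.1)) (P.K z) + dist (P.K z) (P.K x) :=
                dist_triangle _ _ _
            _ ≤ dpp C M + η := by
                have := h2.trans_lt hdead
                linarith
        · have hyT : y ∈ Tᶜ :=
            hball₂ (Metric.mem_ball.2 (lt_of_lt_of_le hdy
              ((min_le_right _ _).trans (min_le_left _ _))))
          have hxRect : x ∈ Rect R'.1.1 R'.1.2 R'.2.1 R'.2.2 := by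
            by_contra hno
            apply hyT
            refine Set.mem_iUnion₂.2 ⟨R', ⟨⟨hR', hdead⟩, hno⟩, ?_⟩
            exact openRect_subset_rect hyR
          obtain ⟨e1, e2, e3, e4, hL, hagree, -⟩ := childP_spec hR'
          have hk1 : 1 ≤ k := by
            have := live_child_lvl_lt hR' hdead
            omega
          obtain ⟨k', rfl⟩ : ∃ k', k = k' + 1 := ⟨k - 1, by omega⟩
          have hxnotopen : x ∉ OpenRect R'.1.1 R'.1.2 R'.2.1 R'.2.2 := hex R' hR'
          have hchild_noholes : ∀ S ∈ (childP P R').Rs,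
              x ∉ OpenRect S.1.1 S.1.2 S.2.1 S.2.2 := by
            intro S hS hmem
            have h5 := (childP P R').hole_open_subset hS hmem
            rw [e1, e2, e3, e4] at h5
            exact hxnotopen h5
          have hgvalx : gval M (k'+1) (childP P R') x = (childP P R').K x :=
            gval_no_hole hchild_noholes
          have hKeq : (childP P R').K x = P.K x := hagree x ⟨hxRect, hxnotopen⟩
          rw [gval_hole_live hR' hyR hdead, hgx, ← hKeq, ← hgvalx]
          refine h₃ R' ⟨⟨hR', hdead⟩, hxRect⟩ y ?_ (lt_of_lt_of_le hdy
            ((min_le_right _ _).trans (min_le_right _ _)))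
          rw [e1, e2, e3, e4]
          exact openRect_subset_rect hyR
      · push_neg at hey
        rw [gval_no_hole hey, hgx]
        have hydom := P.rect_minus_holes_subset_dom hy hey
        have := hK hydom (lt_of_lt_of_le hdy (min_le_left _ _))
        have hp := dpp_pos C M
        linarith


lemma quarter_le_half_pow (M : ℕ) : ((1/4 : ℝ))^M ≤ (1/2)^M := by
  apply pow_le_pow_left₀ (by norm_num) (by norm_num)

lemma Hval_contOn (P : Piece C) (hL : P.L = 0) :
    ContinuousOn (Hval P) (Rect P.p P.q P.r P.s) := by
  intro x hx
  rw [Metric.continuousWithinAt_iff]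
  intro ε hε
  obtain ⟨N, hN⟩ := exists_pow_lt_of_lt_one (show (0:ℝ) < ε/10 by linarith)
    (by norm_num : (1/2:ℝ) < 1)
  set M := max N 1 with hM
  have hM1 : 1 ≤ M := le_max_right _ _
  have hpow : (1/2:ℝ)^M < ε/10 := lt_of_le_of_lt (half_pow_le (le_max_left _ _)) hN
  have hdppM : dpp C M ≤ (1/2:ℝ)^M := (dpp_le_quarter C M).trans (quarter_le_half_pow M)
  obtain ⟨ρ, hρ, hg⟩ := gval_cont M M P (by omega) x hx (ε/10) (by linarith)
  refine ⟨ρ, hρ, fun y hy hdy => ?_⟩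
  have h1 := Hval_gval_dist M hM1 M P x (by omega) hx
  have h2 := Hval_gval_dist M hM1 M P y (by omega) hy
  have h3 := hg y hy hdy
  calc dist (Hval P y) (Hval P x)
      ≤ dist (Hval P y) (gval M M P y) + dist (gval M M P y) (gval M M P x) +
        dist (gval M M P x) (Hval P x) := dist_triangle4 _ _ _ _
    _ ≤ 2 * (1/2:ℝ)^M + (dpp C M + ε/10) + 2 * (1/2:ℝ)^M := by
        rw [dist_comm (gval M M P x)]
        exact add_le_add (add_le_add h2 h3) h1
    _ < ε := by linarith


/-- If some complete metric subspace of `X` contains the ranges of all loops of an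
admissible family, then every loop in the family is null-homotopic. -/
theorem admissible_family_nullhomotopic (F : Set (LoopIn X)) (hF : Admissible F)
    (hcomp : ∃ Y : Set X, IsComplete Y ∧ ∀ f ∈ F, f.f '' Set.Icc f.a f.b ⊆ Y) :
    ∀ f ∈ F, NullHtpc f := by
  obtain ⟨Y, hY, hFY⟩ := hcomp
  intro f hf
  set C : Ctx X := ⟨F, hF, Y, hY, hFY, f⟩ with hC
  obtain ⟨c0, d0, hcd, H0, Rs0, hPH, htop0, hgood0⟩ := hF.1 f hf (dpp C 1) (dpp_pos C 1)
  set root : Piece C := { p := f.a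
                          q := f.b
                          r := c0
                          s := d0
                          hpq := f.hab
                          hrs := hcd
                          K := H0
                          Rs := Rs0
                          L := 0
                          isPH := hPH
                          good := hgood0
                          hdiam := Or.inl rfl } with hroot
  have hnohole : ∀ z : ℝ × ℝ, z ∈ Rect f.a f.b c0 d0 →
      (z.1 = f.a ∨ z.1 = f.b ∨ z.2 = c0 ∨ z.2 = d0) →
      ∀ R' ∈ root.Rs, z ∉ OpenRect R'.1.1 R'.1.2 R'.2.1 R'.2.2 := by
    intro z hz he R' hR' hmem
    have hzb : z ∈ BdryRect root.p root.q root.r root.s := (mem_bdryRect_iff hz).2 he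
    exact (root.piece_bdry_subset_dom hzb).2 (Set.mem_biUnion hR' hmem)
  have hedge : ∀ z : ℝ × ℝ, z ∈ Rect f.a f.b c0 d0 →
      (z.1 = f.a ∨ z.1 = f.b ∨ z.2 = c0 ∨ z.2 = d0) → Hval root z = H0 z :=
    fun z hz he => Hval_no_hole (hnohole z hz he)
  refine ⟨fun z => Hval root (z.1, lin 0 1 c0 d0 z.2), ?_, ?_, ?_, ?_⟩
  · -- continuity
    have hcont : ContinuousOn (Hval root) (Rect f.a f.b c0 d0) := Hval_contOn root rfl
    exact hcont.comp tmap_continuous.continuousOn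
      (fun z hz => (tmap_mem_baseRect one_pos hcd).1 hz)
  · -- top is f
    intro t ht
    show Hval root (t, lin 0 1 c0 d0 1) = f.f t
    rw [lin_right one_pos]
    rw [hedge (t, d0) (mem_rect.2 ⟨ht, hcd.le, le_refl _⟩) (Or.inr (Or.inr (Or.inr rfl)))]
    exact htop0 t ht
  · -- bottom edge constant
    intro t ht
    show Hval root (t, lin 0 1 c0 d0 0) = Hval root (f.a, lin 0 1 c0 d0 0)
    rw [lin_left]
    rw [hedge (t, c0) (mem_rect.2 ⟨ht, le_refl _, hcd.le⟩) (Or.inr (Or.inr (Or.inl rfl))),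
      hedge (f.a, c0) (mem_rect.2 ⟨⟨le_refl _, f.hab.le⟩, le_refl _, hcd.le⟩) (Or.inl rfl)]
    exact hPH.bdd.1 t ht
  · -- side edges constant
    intro u hu
    have hlin : lin 0 1 c0 d0 u ∈ Set.Icc c0 d0 := lin_mem_Icc_base one_pos hcd hu
    have hbdd := hPH.bdd.2 _ hlin
    constructor
    · show Hval root (f.a, lin 0 1 c0 d0 u) = Hval root (f.a, lin 0 1 c0 d0 0)
      rw [lin_left]
      rw [hedge (f.a, lin 0 1 c0 d0 u) (mem_rect.2 ⟨⟨le_refl _, f.hab.le⟩, hlin⟩)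
          (Or.inl rfl),
        hedge (f.a, c0) (mem_rect.2 ⟨⟨le_refl _, f.hab.le⟩, le_refl _, hcd.le⟩) (Or.inl rfl)]
      exact hbdd.1
    · show Hval root (f.b, lin 0 1 c0 d0 u) = Hval root (f.a, lin 0 1 c0 d0 0)
      rw [lin_left]
      rw [hedge (f.b, lin 0 1 c0 d0 u) (mem_rect.2 ⟨⟨f.hab.le, le_refl _⟩, hlin⟩)
          (Or.inr (Or.inl rfl)),
        hedge (f.a, c0) (mem_rect.2 ⟨⟨le_refl _, f.hab.le⟩, le_refl _, hcd.le⟩) (Or.inl rfl)]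
      exact hbdd.2

end EarringPaper
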